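/- Let σ = (a₁,…,a_m) be a sequence of distinct items with start times t(a₁) ≤ t(a₂) ≤ ⋯ ≤ t(a_m) (t taking nonnegative real values) and nonnegative costs c(a₁),…,c(a_m). Let σ' be any subsequence of σ, and run the sequential selection procedure on σ': processing the items of σ' in order, an item a is selected if and only if the total cost of the items of σ' already selected is at most t(a). Then every item a occurring in σ' that satisfies Σ_{b ∈ σ : t(b) ≤ t(a), b ≠ a} c(b) ≤ t(a) is selected by the procedure. -/

import Mathlib

open Finset

/-- The sequential selection procedure: processing the items in order while maintaining
the running total `tot` of the costs of selected items, an item `a` is selected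
(adding `c a` to the running total) exactly when the current running total is at
most `t a`. -/
noncomputable def select {A : Type} (t c : A → ℝ) : List A → ℝ → List A
  | [], _ => []
  | a :: rest, tot =>
      if tot ≤ t a then a :: select t c rest (tot + c a) else select t c rest tot

lemma select_aux {A : Type} [DecidableEq A] (t c : A → ℝ) (hc : ∀ a, 0 ≤ c a) :
    ∀ (σ' : List A) (tot : ℝ), 0 ≤ tot → σ'.Nodup →
      σ'.Pairwise (fun a b => t a ≤ t b) →
      ∀ a ∈ σ',
        tot + ∑ b ∈ σ'.toFinset.filter (fun b => t b ≤ t a ∧ b ≠ a), c b ≤ t a →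
        a ∈ select t c σ' tot := by
  intro σ'
  induction σ' with
  | nil => intro tot _ _ _ a ha; exact absurd ha List.not_mem_nil
  | cons x rest ih =>
    intro tot htot hnd hsort a ha hsum
    have hndr : rest.Nodup := hnd.of_cons
    have hxrest : x ∉ rest := (List.nodup_cons.mp hnd).1
    have hsortr : rest.Pairwise (fun a b => t a ≤ t b) := hsort.of_cons
    have hsumnn : ∀ (s : Finset A), (0:ℝ) ≤ ∑ b ∈ s, c b :=
      fun s => Finset.sum_nonneg fun b _ => hc b
    rcases List.mem_cons.mp ha with rfl | har
    · -- a is the head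
      have : tot ≤ t a := by
        have := hsumnn ((a :: rest).toFinset.filter (fun b => t b ≤ t a ∧ b ≠ a))
        linarith
      simp only [select, if_pos this]
      exact List.mem_cons_self
    · by_cases hx : tot ≤ t x
      · simp only [select, if_pos hx]
        refine List.mem_cons_of_mem x ?_
        apply ih (tot + c x) (by linarith [hc x]) hndr hsortr a har
        have htxa : t x ≤ t a := (List.pairwise_cons.mp hsort).1 a har
        have hxa : x ≠ a := fun h => hxrest (h ▸ har)
        have hfilt : ((x :: rest).toFinset).filter (fun b => t b ≤ t a ∧ b ≠ a)
            = insert x ((rest.toFinset).filter (fun b => t b ≤ t a ∧ b ≠ a)) := by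
          rw [List.toFinset_cons, Finset.filter_insert, if_pos ⟨htxa, hxa⟩]
        have hxnotin : x ∉ (rest.toFinset).filter (fun b => t b ≤ t a ∧ b ≠ a) :=
          fun h => hxrest (List.mem_toFinset.mp (Finset.mem_filter.mp h).1)
        rw [hfilt, Finset.sum_insert hxnotin] at hsum
        linarith
      · simp only [select, if_neg hx]
        apply ih tot htot hndr hsortr a har
        have hmono : ∑ b ∈ (rest.toFinset).filter (fun b => t b ≤ t a ∧ b ≠ a), c b
            ≤ ∑ b ∈ ((x :: rest).toFinset).filter (fun b => t b ≤ t a ∧ b ≠ a), c b := by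
          apply Finset.sum_le_sum_of_subset_of_nonneg
          · apply Finset.filter_subset_filter
            intro b hb
            simp only [List.toFinset_cons, Finset.mem_insert]
            exact Or.inr hb
          · intro b _ _; exact hc b
        linarith

/-- Let `σ` be a sequence of distinct items sorted in nondecreasing order of start
times `t`, with nonnegative costs `c`, and let `σ'` be any subsequence of `σ`.  Then
every item `a` of `σ'` with `∑ {b ∈ σ : t b ≤ t a, b ≠ a} c b ≤ t a` is selected when
the sequential selection procedure is run on `σ'` (with initial running total `0`). -/
theorem mem_select_of_total_cost_le {A : Type} [DecidableEq A]
    (t c : A → ℝ) (ht : ∀ a, 0 ≤ t a) (hc : ∀ a, 0 ≤ c a)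
    (σ σ' : List A) (hnd : σ.Nodup)
    (hsorted : σ.Pairwise fun a b => t a ≤ t b)
    (hsub : σ'.Sublist σ)
    (a : A) (ha : a ∈ σ')
    (hcond : ∑ b ∈ σ.toFinset.filter (fun b => t b ≤ t a ∧ b ≠ a), c b ≤ t a) :
    a ∈ select t c σ' 0 := by
  apply select_aux t c hc σ' 0 le_rfl (hnd.sublist hsub) (hsorted.sublist hsub) a ha
  have hsubset : σ'.toFinset ⊆ σ.toFinset := fun b hb =>
    List.mem_toFinset.mpr (hsub.subset (List.mem_toFinset.mp hb))
  have : ∑ b ∈ σ'.toFinset.filter (fun b => t b ≤ t a ∧ b ≠ a), c b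
      ≤ ∑ b ∈ σ.toFinset.filter (fun b => t b ≤ t a ∧ b ≠ a), c b := by
    apply Finset.sum_le_sum_of_subset_of_nonneg
    · exact Finset.filter_subset_filter _ hsubset
    · intro b _ _; exact hc b
  linarith
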